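/- Let η : ℝⁿ → [0,∞) be a Lipschitz function with constant L, with support contained in the ball B_R(0). For μ ∈ M define v[μ](x) = ∫_{ℝⁿ} (x−y) η(x−y) dμ(y). Then for all μ, ν ∈ M: sup_{x∈ℝⁿ} |v[μ](x) − v[ν](x)| ≤ R L · W₁(μ, ν), i.e. v is Lipschitz from (M, W₁) to (C⁰, sup norm). (The key intermediate fact is that for each fixed x the map y ↦ (x−y)η(x−y) is Lipschitz with constant R L, so the Kantorovich–Rubinstein duality formula applies.) -/

import Mathlib

open MeasureTheory Set
open scoped RealInnerProductSpace

noncomputable section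

abbrev En (n : ℕ) : Type := EuclideanSpace ℝ (Fin n)

/-- `𝓜`: probability measures on ℝⁿ with compact support, absolutely continuous
with respect to Lebesgue measure. -/
def MemM (n : ℕ) (μ : Measure (En n)) : Prop :=
  IsProbabilityMeasure μ ∧ μ ≪ (volume : Measure (En n)) ∧
    ∃ K : Set (En n), IsCompact K ∧ μ Kᶜ = 0

/-- A finite positive measure on ℝⁿ, absolutely continuous with respect to Lebesgue
measure and compactly supported. -/
def NiceMeasure (n : ℕ) (μ : Measure (En n)) : Prop :=
  IsFiniteMeasure μ ∧ μ ≪ (volume : Measure (En n)) ∧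
    ∃ K : Set (En n), IsCompact K ∧ μ Kᶜ = 0

/-- Wasserstein distance of exponent `p`, in the Monge (transport-map) formulation:
`W_p(μ,ν) = inf { (∫ ‖γ x - x‖^p dμ)^(1/p) : γ measurable, γ#μ = ν }`. -/
def Wp (n : ℕ) (p : ℝ) (μ ν : Measure (En n)) : ℝ :=
  sInf { c : ℝ | ∃ γ : En n → En n, Measurable γ ∧ Measure.map γ μ = ν ∧
    c = (∫ x, ‖γ x - x‖ ^ p ∂μ) ^ (1 / p) }

/-- `Φ` is the flow of the vector field `v`: `Φ 0 x = x` and `∂ₜ Φ t x = v (Φ t x)`. -/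
def IsFlow (n : ℕ) (v : En n → En n) (Φ : ℝ → En n → En n) : Prop :=
  (∀ x, Φ 0 x = x) ∧ ∀ x t, HasDerivAt (fun s => Φ s x) (v (Φ t x)) t

/-- Hypothesis (H): `v[μ]` is `C¹`, uniformly Lipschitz (constant `L`), uniformly
bounded (constant `M`), and `μ ↦ v[μ]` is Lipschitz from `(𝓜, W_p)` to `C⁰` with
constant `K`. -/
def HypH (n : ℕ) (p : ℝ) (v : Measure (En n) → En n → En n) (L M K : ℝ) : Prop :=
  0 < L ∧ 0 < M ∧ 0 < K ∧
  (∀ μ, MemM n μ → ContDiff ℝ 1 (v μ)) ∧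
  (∀ μ, MemM n μ → ∀ x y, ‖v μ x - v μ y‖ ≤ L * ‖x - y‖) ∧
  (∀ μ, MemM n μ → ∀ x, ‖v μ x‖ ≤ M) ∧
  (∀ μ ν, MemM n μ → MemM n ν → ∀ x, ‖v μ x - v ν x‖ ≤ K * Wp n p μ ν)

/-- Scheme 1 (semi-discrete in time Lagrangian scheme) with time step `Δt` on `[0,T]`:
`μ 0 = μ₀` and, on each interval `[iΔt, (i+1)Δt]`, `μ t` is the push-forward of
`μ (iΔt)` by the flow of the frozen vector field `v[μ (iΔt)]`. -/
def Scheme1 (n : ℕ) (v : Measure (En n) → En n → En n) (μ₀ : Measure (En n))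
    (Δt T : ℝ) (μ : ℝ → Measure (En n)) : Prop :=
  μ 0 = μ₀ ∧
  ∀ i : ℕ, ∀ t : ℝ, (i : ℝ) * Δt ≤ t → t ≤ ((i : ℝ) + 1) * Δt → t ≤ T →
    ∃ Φ : ℝ → En n → En n, IsFlow n (v (μ ((i : ℝ) * Δt))) Φ ∧
      μ t = Measure.map (Φ (t - (i : ℝ) * Δt)) (μ ((i : ℝ) * Δt))

/-- Weak (distributional) solution of `∂ₜ μₜ + ∇·(v[μₜ] μₜ) = 0` on `[0,T]`:
for every test function `f ∈ C_c^∞([0,T] × ℝⁿ)`,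
`∫_0^T ∫ (∂ₜ f + v[μₜ]·∇f) dμₜ dt = 0`. -/
def IsWeakSolution (n : ℕ) (v : Measure (En n) → En n → En n) (T : ℝ)
    (μ : ℝ → Measure (En n)) : Prop :=
  ∀ f : ℝ → En n → ℝ,
    ContDiff ℝ (⊤ : ℕ∞) (Function.uncurry f) →
    HasCompactSupport (Function.uncurry f) →
    (∫ t in Icc (0 : ℝ) T,
      ∫ x, (deriv (fun s => f s x) t + ⟪v (μ t) x, gradient (fun y => f t y) x⟫)
        ∂(μ t)) = 0

/-- Continuity in time with respect to the Wasserstein distance `W_p`, on `[0,T]`. -/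
def WpContinuousOn (n : ℕ) (p T : ℝ) (μ : ℝ → Measure (En n)) : Prop :=
  ∀ t ∈ Icc (0 : ℝ) T, ∀ ε > 0, ∃ δ > 0, ∀ s ∈ Icc (0 : ℝ) T, |s - t| < δ →
    Wp n p (μ s) (μ t) < ε

/-- The axis-parallel grid cell of side `Δx` indexed by `k : Fin n → ℤ`. -/
def gridCell (n : ℕ) (Δx : ℝ) (k : Fin n → ℤ) : Set (En n) :=
  {x | ∀ i, (k i : ℝ) * Δx ≤ x i ∧ x i < ((k i : ℝ) + 1) * Δx}

/-- The index of the grid cell of side `Δx` containing `x`. -/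
def gridIdx (n : ℕ) (Δx : ℝ) (x : En n) : Fin n → ℤ := fun i => ⌊x i / Δx⌋

/-- Grid discretization `G[μ]`: the measure which, on each cell `□` of the grid of
side `Δx`, has constant density `μ(□)/Δxⁿ` with respect to Lebesgue measure. -/
def gridDisc (n : ℕ) (Δx : ℝ) (μ : Measure (En n)) : Measure (En n) :=
  (volume : Measure (En n)).withDensity
    (fun x => μ (gridCell n Δx (gridIdx n Δx x)) / ENNReal.ofReal (Δx ^ n))

/-- `L¹` distance between two measures, via their densities (Radon–Nikodym
derivatives) with respect to Lebesgue measure. -/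
def L1dist (n : ℕ) (μ ν : Measure (En n)) : ℝ :=
  ∫ x, |(μ.rnDeriv (volume : Measure (En n)) x).toReal -
        (ν.rnDeriv (volume : Measure (En n)) x).toReal|


section Helpers
open Filter ProbabilityTheory
open scoped Topology


lemma cdf_leftLim (ρ : Measure ℝ) [IsProbabilityMeasure ρ] (hρ : ∀ x : ℝ, ρ {x} = 0)
    (s : ℝ) : cdf ρ s = Function.leftLim (cdf ρ) s := by
  have h1 := (cdf ρ).measure_singleton s
  rw [measure_cdf, hρ s] at h1
  have h2 := ENNReal.ofReal_eq_zero.mp h1.symm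
  have h3 := (monotone_cdf ρ).leftLim_le (le_refl s)
  linarith

lemma cdf_level (ρ : Measure ℝ) [IsProbabilityMeasure ρ] (hρ : ∀ x : ℝ, ρ {x} = 0)
    (c : ℝ) (hc0 : 0 ≤ c) (hc1 : c < 1) :
    ρ {y | cdf ρ y ≤ c} = ENNReal.ofReal c := by
  set F := cdf ρ with hF
  rcases eq_empty_or_nonempty {y | F y ≤ c} with hS | hS
  · have hc : c ≤ 0 := by
      by_contra h
      push_neg at h
      obtain ⟨y, hy⟩ := ((tendsto_cdf_atBot ρ).eventually_lt_const h).exists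
      exact (eq_empty_iff_forall_notMem.mp hS y) hy.le
    have hc' : c = 0 := le_antisymm hc hc0
    subst hc'
    rw [hS]
    simp
  · obtain ⟨b, hb⟩ := ((tendsto_cdf_atTop ρ).eventually_const_lt hc1).exists_forall_of_atTop
    have hbdd : BddAbove {y | F y ≤ c} := by
      refine ⟨b, fun y hy => ?_⟩
      by_contra h
      push_neg at h
      exact absurd hy (not_le.mpr (hb y h.le))
    set s := sSup {y | F y ≤ c} with hs
    have hall : ∀ y < s, F y ≤ c := by
      intro y hy
      obtain ⟨z, hz, hyz⟩ := exists_lt_of_lt_csSup hS hy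
      exact le_trans (F.mono hyz.le) hz
    have hFs : F s ≤ c := by
      rw [hF] at hall ⊢
      rw [cdf_leftLim ρ hρ s]
      rw [Monotone.leftLim_eq_sSup (monotone_cdf ρ)]
      exact csSup_le (Set.Nonempty.image _ Set.nonempty_Iio)
        (by rintro _ ⟨y, hy, rfl⟩; exact hall y hy)
    have hIic : {y | F y ≤ c} = Iic s :=
      subset_antisymm (fun y hy => le_csSup hbdd hy)
        (fun y hy => le_trans (F.mono hy) hFs)
    have hFs' : c ≤ F s := by
      have hall2 : ∀ y ∈ Ioi s, c ≤ F y := by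
        intro y hy
        by_contra h
        push_neg at h
        exact absurd (le_csSup hbdd h.le) (not_le.mpr hy)
      have htd : Tendsto F (𝓝[>] s) (𝓝 (F s)) :=
        (F.right_continuous s).mono_left (nhdsWithin_mono s Ioi_subset_Ici_self)
      exact ge_of_tendsto htd (eventually_nhdsWithin_of_forall hall2)
    have hfc : F s = c := le_antisymm hFs hFs'
    rw [hIic, ← ofReal_cdf (μ := ρ) s, ← hF, hfc]


lemma quantile_galois (σ : Measure ℝ) [IsProbabilityMeasure σ] (t a : ℝ) (ht0 : 0 < t)
    (hS : {x : ℝ | t ≤ cdf σ x}.Nonempty) :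
    sInf {x : ℝ | t ≤ cdf σ x} ≤ a ↔ t ≤ cdf σ a := by
  have hbdd : BddBelow {x : ℝ | t ≤ cdf σ x} := by
    obtain ⟨b, hb⟩ := ((tendsto_cdf_atBot σ).eventually_lt_const ht0).exists_forall_of_atBot
    refine ⟨b, fun x hx => ?_⟩
    by_contra h
    push_neg at h
    exact absurd hx (not_le.mpr (hb x h.le))
  constructor
  · intro h
    have hmem : sInf {x : ℝ | t ≤ cdf σ x} ∈ {x : ℝ | t ≤ cdf σ x} := by
      have hall : ∀ y ∈ Ioi (sInf {x : ℝ | t ≤ cdf σ x}), t ≤ cdf σ y := by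
        intro y hy
        obtain ⟨z, hz, hzy⟩ := exists_lt_of_csInf_lt hS hy
        exact le_trans hz ((monotone_cdf σ) hzy.le)
      have htd : Tendsto (cdf σ) (𝓝[>] (sInf {x : ℝ | t ≤ cdf σ x}))
          (𝓝 (cdf σ (sInf {x : ℝ | t ≤ cdf σ x}))) :=
        ((cdf σ).right_continuous _).mono_left (nhdsWithin_mono _ Ioi_subset_Ici_self)
      exact ge_of_tendsto htd (eventually_nhdsWithin_of_forall hall)
    exact le_trans hmem ((monotone_cdf σ) h)
  · intro h
    exact csInf_le hbdd h

lemma exists_transport_real (ρ σ : Measure ℝ) [IsProbabilityMeasure ρ] [IsProbabilityMeasure σ]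
    (hρ : ∀ x : ℝ, ρ {x} = 0) :
    ∃ γ : ℝ → ℝ, Measurable γ ∧ Measure.map γ ρ = σ := by
  classical
  set F : ℝ → ℝ := fun y => cdf ρ y with hFdef
  set G : ℝ → ℝ := fun t => sInf {x : ℝ | t ≤ cdf σ x} with hGdef
  set γ : ℝ → ℝ := fun y => if 0 < F y ∧ F y < 1 then G (F y) else 0 with hγdef
  have hFmeas : Measurable F := (monotone_cdf ρ).measurable
  have hSne : ∀ t : ℝ, t < 1 → {x : ℝ | t ≤ cdf σ x}.Nonempty := by
    intro t ht
    obtain ⟨x, hx⟩ := ((tendsto_cdf_atTop σ).eventually_const_lt ht).exists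
    exact ⟨x, hx.le⟩
  have hpre : ∀ a : ℝ, γ ⁻¹' (Iic a) =
      ({y | 0 < F y ∧ F y < 1} ∩ {y | F y ≤ cdf σ a}) ∪
      ({y | 0 < F y ∧ F y < 1}ᶜ ∩ {y | (0:ℝ) ≤ a}) := by
    intro a
    ext y
    simp only [hγdef, Set.mem_preimage, Set.mem_Iic, Set.mem_union, Set.mem_inter_iff,
      Set.mem_setOf_eq, Set.mem_compl_iff]
    by_cases h : 0 < F y ∧ F y < 1
    · rw [if_pos h]
      have := quantile_galois σ (F y) a h.1 (hSne _ h.2)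
      simp only [hGdef]
      tauto
    · rw [if_neg h]
      tauto
  have hγmeas : Measurable γ := by
    refine measurable_of_Iic (fun a => ?_)
    rw [hpre a]
    exact ((hFmeas measurableSet_Ioo).inter (hFmeas measurableSet_Iic)).union
      (((hFmeas measurableSet_Ioo).compl).inter (MeasurableSet.const _))
  refine ⟨γ, hγmeas, ?_⟩
  haveI : IsProbabilityMeasure (Measure.map γ ρ) := Measure.isProbabilityMeasure_map hγmeas.aemeasurable
  refine Measure.ext_of_Iic _ _ (fun a => ?_)
  rw [Measure.map_apply hγmeas measurableSet_Iic, hpre a]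
  have hN0 : ρ {y | F y ≤ 0} = 0 := by
    have := cdf_level ρ hρ 0 le_rfl one_pos
    simpa using this
  have hN1 : ρ {y | 1 ≤ F y} = 0 := by
    have key : ∀ c : ℝ, 0 ≤ c → c < 1 → ρ {y | 1 ≤ F y} ≤ 1 - ENNReal.ofReal c := by
      intro c h0 h1
      have hsub : {y | 1 ≤ F y} ⊆ {y | F y ≤ c}ᶜ := by
        intro y hy
        simp only [Set.mem_compl_iff, Set.mem_setOf_eq] at *
        linarith
      have hms : MeasurableSet {y | F y ≤ c} := hFmeas measurableSet_Iic
      calc ρ {y | 1 ≤ F y} ≤ ρ {y | F y ≤ c}ᶜ := measure_mono hsub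
        _ = 1 - ρ {y | F y ≤ c} := by
            rw [measure_compl hms (measure_ne_top ρ _), measure_univ]
        _ = 1 - ENNReal.ofReal c := by rw [cdf_level ρ hρ c h0 h1]
    have key2 : ∀ ε : ℝ, 0 < ε → ε < 1 → ρ {y | 1 ≤ F y} ≤ ENNReal.ofReal ε := by
      intro ε hε hε1
      refine le_trans (key (1 - ε) (by linarith) (by linarith)) ?_
      rw [tsub_le_iff_right, ← ENNReal.ofReal_add hε.le (by linarith)]
      norm_num
    by_contra h
    have hm : ρ {y | 1 ≤ F y} ≤ 1 := prob_le_one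
    have hne : ρ {y | 1 ≤ F y} ≠ ⊤ := measure_ne_top ρ _
    set r := (ρ {y | 1 ≤ F y}).toReal with hr
    have hr0 : 0 < r := ENNReal.toReal_pos h hne
    have hr1 : r ≤ 1 := by
      have := ENNReal.toReal_mono ENNReal.one_ne_top hm
      simpa using this
    have h2 := key2 (r / 2) (by linarith) (by linarith)
    rw [← ENNReal.ofReal_toReal hne, ← hr] at h2
    rw [ENNReal.ofReal_le_ofReal_iff (by linarith)] at h2
    linarith
  -- a.e. identification
  have hae : (((({y | 0 < F y ∧ F y < 1} : Set ℝ) ∩ {y | F y ≤ cdf σ a}) ∪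
      (({y | 0 < F y ∧ F y < 1} : Set ℝ)ᶜ ∩ {y | (0:ℝ) ≤ a})) : Set ℝ) =ᵐ[ρ]
      ({y | F y ≤ cdf σ a} : Set ℝ) := by
    have hae0 : ∀ᵐ y ∂ρ, ¬ (F y ≤ 0) := by
      rw [ae_iff]; simpa using hN0
    have hae1 : ∀ᵐ y ∂ρ, ¬ (1 ≤ F y) := by
      rw [ae_iff]; simpa using hN1
    rw [Filter.eventuallyEq_set]
    filter_upwards [hae0, hae1] with y h0 h1
    have hy : 0 < F y ∧ F y < 1 := ⟨lt_of_not_ge h0, lt_of_not_ge h1⟩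
    simp only [Set.mem_union, Set.mem_inter_iff, Set.mem_setOf_eq, Set.mem_compl_iff]
    tauto
  rw [measure_congr hae]
  rcases lt_or_ge (cdf σ a) 1 with hca | hca
  · rw [cdf_level ρ hρ _ (cdf_nonneg σ a) hca, ofReal_cdf]
  · have h1 : cdf σ a = 1 := le_antisymm (cdf_le_one σ a) hca
    have huniv : {y | F y ≤ cdf σ a} = Set.univ := by
      ext y; simp only [Set.mem_setOf_eq, Set.mem_univ, iff_true, h1]
      exact cdf_le_one ρ y
    rw [huniv, ← ofReal_cdf (μ := σ) a, h1]
    simp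

lemma En_transport (n : ℕ) (hn : 0 < n) (μ ν : Measure (En n))
    (hμ : MemM n μ) (hν : MemM n ν) :
    ∃ γ : En n → En n, Measurable γ ∧ Measure.map γ μ = ν := by
  haveI hμp : IsProbabilityMeasure μ := hμ.1
  haveI hνp : IsProbabilityMeasure ν := hν.1
  have i0 : Fin n := ⟨0, hn⟩
  have hunc : ¬ Countable (En n) := by
    intro h
    have hinj : Function.Injective (fun r : ℝ => (EuclideanSpace.single i0 r : En n)) := by
      intro a b hab
      have h2 := congrArg (fun z : En n => z i0) hab
      simpa [EuclideanSpace.single_apply] using h2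
    haveI := h
    exact not_countable hinj.countable
  have hunc' : ¬ Countable ℝ := not_countable
  set e : (En n) ≃ᵐ ℝ := PolishSpace.measurableEquivOfNotCountable hunc hunc' with he
  haveI : Nontrivial (En n) := by
    refine ⟨⟨0, EuclideanSpace.single i0 1, fun h => ?_⟩⟩
    have h1 : ‖(0 : En n)‖ = ‖(EuclideanSpace.single i0 (1:ℝ) : En n)‖ := by rw [h]
    rw [norm_zero, EuclideanSpace.norm_single] at h1
    norm_num at h1
  have hvol : ∀ x : En n, (volume : Measure (En n)) {x} = 0 := fun x => measure_singleton x
  have hatomμ : ∀ x : ℝ, (Measure.map e μ) {x} = 0 := by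
    intro x
    have hpre : ⇑e ⁻¹' {x} = {e.symm x} := by
      ext z
      simp only [Set.mem_preimage, Set.mem_singleton_iff]
      constructor
      · intro hz; rw [← hz]; exact (e.symm_apply_apply z).symm
      · rintro rfl; exact e.apply_symm_apply x
    rw [Measure.map_apply e.measurable (measurableSet_singleton x), hpre]
    exact hμ.2.1 (hvol _)
  haveI : IsProbabilityMeasure (Measure.map e μ) :=
    Measure.isProbabilityMeasure_map e.measurable.aemeasurable
  haveI : IsProbabilityMeasure (Measure.map e ν) :=
    Measure.isProbabilityMeasure_map e.measurable.aemeasurable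
  obtain ⟨g, hg, hmap⟩ := exists_transport_real (Measure.map e μ) (Measure.map e ν) hatomμ
  refine ⟨⇑e.symm ∘ g ∘ ⇑e, (e.symm.measurable.comp (hg.comp e.measurable)), ?_⟩
  have h1 : Measure.map (⇑e.symm ∘ g ∘ ⇑e) μ
      = Measure.map e.symm (Measure.map g (Measure.map e μ)) := by
    rw [Measure.map_map hg e.measurable, Measure.map_map e.symm.measurable (hg.comp e.measurable)]
  rw [h1, hmap, Measure.map_map e.symm.measurable e.measurable]
  have h2 : (⇑e.symm ∘ ⇑e) = id := by ext z; simp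
  rw [h2, Measure.map_id]

end Helpers

/-- The map `μ ↦ v[μ]` with `v[μ](x) = ∫ (x-y)η(x-y) dμ(y)` is Lipschitz from
`(𝓜, W₁)` to `(C⁰, sup norm)` with constant `R L`:
`sup_x ‖v[μ](x) - v[ν](x)‖ ≤ R L W₁(μ,ν)`. -/
theorem stmt18 (n : ℕ) (L R : ℝ) (hR : 0 < R)
    (η : En n → ℝ) (hη0 : ∀ x, 0 ≤ η x)
    (hηL : ∀ x y, |η x - η y| ≤ L * ‖x - y‖)
    (hsupp : Function.support η ⊆ Metric.ball (0 : En n) R)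
    (μ ν : Measure (En n)) (hμ : MemM n μ) (hν : MemM n ν) :
    ∀ x : En n,
      ‖(∫ y, η (x - y) • (x - y) ∂μ) - (∫ y, η (x - y) • (x - y) ∂ν)‖ ≤
        R * L * Wp n 1 μ ν := by
  intro x
  rcases Nat.eq_zero_or_pos n with hn0 | hn
  · -- trivial case n = 0
    subst hn0
    have hz : ∀ y : En 0, η (x - y) • (x - y) = (0 : En 0) := by
      intro y
      have h0 : x - y = 0 := Subsingleton.elim _ _
      rw [h0, smul_zero]
    have hLHS : (∫ y, η (x - y) • (x - y) ∂μ) - (∫ y, η (x - y) • (x - y) ∂ν) = 0 := by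
      simp only [hz, integral_zero, sub_zero]
    rw [hLHS, norm_zero]
    have hW : Wp 0 1 μ ν = 0 := by
      rw [Wp]
      have hsub : {c : ℝ | ∃ γ : En 0 → En 0, Measurable γ ∧ Measure.map γ μ = ν ∧
          c = (∫ z, ‖γ z - z‖ ^ (1:ℝ) ∂μ) ^ (1/(1:ℝ))} ⊆ {0} := by
        rintro c ⟨γ, hγ, hmap, rfl⟩
        have hz2 : ∀ z : En 0, ‖γ z - z‖ ^ (1:ℝ) = 0 := by
          intro z
          have h0 : γ z - z = 0 := Subsingleton.elim _ _
          rw [h0, norm_zero, Real.zero_rpow one_ne_zero]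
        simp only [hz2, integral_zero, Set.mem_singleton_iff]
        rw [Real.zero_rpow (by norm_num)]
      rcases Set.eq_empty_or_nonempty {c : ℝ | ∃ γ : En 0 → En 0, Measurable γ ∧
          Measure.map γ μ = ν ∧ c = (∫ z, ‖γ z - z‖ ^ (1:ℝ) ∂μ) ^ (1/(1:ℝ))} with h | h
      · rw [h, Real.sInf_empty]
      · rw [h.subset_singleton_iff.mp hsub, csInf_singleton]
    rw [hW, mul_zero]
  · -- main case n ≥ 1
    haveI hμp : IsProbabilityMeasure μ := hμ.1
    haveI hνp : IsProbabilityMeasure ν := hν.1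
    have i0 : Fin n := ⟨0, hn⟩
    -- basic facts about η
    have hL0 : 0 ≤ L := by
      have h := hηL (EuclideanSpace.single i0 1) 0
      rw [sub_zero, EuclideanSpace.norm_single, norm_one, mul_one] at h
      exact le_trans (abs_nonneg _) h
    have hηcont : Continuous η := by
      have hlip : LipschitzWith (Real.toNNReal L) η := by
        apply LipschitzWith.of_dist_le_mul
        intro a b
        rw [Real.dist_eq, Real.coe_toNNReal L hL0, dist_eq_norm]
        exact hηL a b
      exact hlip.continuous
    have hzero : ∀ u : En n, R ≤ ‖u‖ → η u = 0 := by
      intro u hu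
      by_contra h
      have hmem : u ∈ Function.support η := h
      have h2 := hsupp hmem
      rw [Metric.mem_ball, dist_zero_right] at h2
      linarith
    have hupper : ∀ u : En n, ‖u‖ < R → η u ≤ L * (R - ‖u‖) := by
      intro u hu
      by_cases h0 : u = 0
      · subst h0
        have hw : ‖(EuclideanSpace.single i0 R : En n)‖ = R := by
          rw [EuclideanSpace.norm_single, Real.norm_eq_abs, abs_of_pos hR]
        have hηw : η (EuclideanSpace.single i0 R) = 0 := hzero _ hw.ge
        have h := hηL 0 (EuclideanSpace.single i0 R)
        rw [hηw, sub_zero, zero_sub, norm_neg, hw] at h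
        have := (le_abs_self (η 0)).trans h
        simpa using this
      · have hu0 : 0 < ‖u‖ := norm_pos_iff.mpr h0
        have hw : ‖((R / ‖u‖) • u : En n)‖ = R := by
          rw [norm_smul, Real.norm_eq_abs, abs_of_pos (div_pos hR hu0)]
          field_simp
        have hηw : η ((R / ‖u‖) • u) = 0 := hzero _ hw.ge
        have h := hηL u ((R / ‖u‖) • u)
        rw [hηw, sub_zero] at h
        have huw : ‖u - (R / ‖u‖) • u‖ = R - ‖u‖ := by
          have h1 : u - (R / ‖u‖) • u = (1 - R / ‖u‖) • u := by
            rw [sub_smul, one_smul]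
          have h3 : (1:ℝ) < R / ‖u‖ := (one_lt_div hu0).mpr hu
          rw [h1, norm_smul, Real.norm_eq_abs, abs_of_neg (by linarith)]
          field_simp
          ring
        calc η u ≤ |η u| := le_abs_self _
          _ ≤ L * ‖u - (R / ‖u‖) • u‖ := h
          _ = L * (R - ‖u‖) := by rw [huw]
    have halfkey : ∀ u v : En n, ‖v‖ ≤ ‖u‖ → ‖η u • u - η v • v‖ ≤ R * L * ‖u - v‖ := by
      intro u v hvu
      rcases lt_or_ge ‖u‖ R with hu | hu
      · have hdecomp : η u • u - η v • v = η u • (u - v) + (η u - η v) • v := by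
          rw [smul_sub, sub_smul]; abel
        rw [hdecomp]
        refine le_trans (norm_add_le _ _) ?_
        rw [norm_smul, norm_smul, Real.norm_eq_abs, Real.norm_eq_abs, abs_of_nonneg (hη0 u)]
        have h1 := hupper u hu
        have h2 := hηL u v
        nlinarith [norm_nonneg (u - v), norm_nonneg v, abs_nonneg (η u - η v), hη0 u,
          mul_le_mul_of_nonneg_right h1 (norm_nonneg (u - v)),
          mul_le_mul_of_nonneg_right h2 (norm_nonneg v),
          mul_le_mul_of_nonneg_left hvu (mul_nonneg hL0 (norm_nonneg (u - v)))]
      · rw [hzero u hu, zero_smul, zero_sub, norm_neg, norm_smul, Real.norm_eq_abs,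
          abs_of_nonneg (hη0 v)]
        rcases lt_or_ge ‖v‖ R with hv | hv
        · have h1 := hupper v hv
          have h2 : R - ‖v‖ ≤ ‖u - v‖ := by linarith [norm_sub_norm_le u v]
          nlinarith [norm_nonneg v, hη0 v, norm_nonneg (u - v), hL0, hv.le,
            mul_le_mul_of_nonneg_right h1 (norm_nonneg v),
            mul_le_mul_of_nonneg_left h2 hL0,
            mul_nonneg hL0 (norm_nonneg (u - v))]
        · rw [hzero v hv, zero_mul]
          positivity
    have key : ∀ u v : En n, ‖η u • u - η v • v‖ ≤ R * L * ‖u - v‖ := by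
      intro u v
      rcases le_total ‖v‖ ‖u‖ with h | h
      · exact halfkey u v h
      · rw [← norm_neg, neg_sub, ← norm_neg (u - v), neg_sub]
        exact halfkey v u h
    -- bound for the integrand
    have hboundf : ∀ u : En n, ‖η u • u‖ ≤ R * L * R := by
      intro u
      rw [norm_smul, Real.norm_eq_abs, abs_of_nonneg (hη0 u)]
      rcases lt_or_ge ‖u‖ R with h | h
      · have h1 := hupper u h
        nlinarith [mul_le_mul_of_nonneg_right h1 (norm_nonneg u),
          mul_nonneg hL0 (sq_nonneg (R - ‖u‖)),
          mul_nonneg (mul_nonneg hL0 hR.le) (norm_nonneg u)]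
      · rw [hzero u h, zero_mul]
        positivity
    have hcont : Continuous (fun y : En n => η (x - y) • (x - y)) := by
      have hg : Continuous (fun y : En n => x - y) := continuous_const.sub continuous_id
      exact (hηcont.comp hg).smul hg
    have hint_f : ∀ (θ : Measure (En n)), IsProbabilityMeasure θ →
        Integrable (fun y : En n => η (x - y) • (x - y)) θ := by
      intro θ hθ
      exact Integrable.mono' (integrable_const (R * L * R)) hcont.aestronglyMeasurable
        (ae_of_all _ (fun y => hboundf _))
    -- key estimate for every admissible transport cost
    have hkeyS : ∀ c ∈ {c : ℝ | ∃ γ : En n → En n, Measurable γ ∧ Measure.map γ μ = ν ∧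
        c = (∫ z, ‖γ z - z‖ ^ (1:ℝ) ∂μ) ^ (1/(1:ℝ))},
        ‖(∫ y, η (x - y) • (x - y) ∂μ) - (∫ y, η (x - y) • (x - y) ∂ν)‖ ≤ R * L * c := by
      rintro c ⟨γ, hγ, hmap, rfl⟩
      have hrw : (∫ z, ‖γ z - z‖ ^ (1:ℝ) ∂μ) ^ (1/(1:ℝ)) = ∫ z, ‖γ z - z‖ ∂μ := by
        rw [show (1:ℝ)/1 = 1 by norm_num]
        simp [Real.rpow_one]
      rw [hrw]
      obtain ⟨Kμ, hKμc, hKμ0⟩ := hμ.2.2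
      obtain ⟨Kν, hKνc, hKν0⟩ := hν.2.2
      obtain ⟨Cμ, hCμ⟩ := hKμc.isBounded.subset_closedBall 0
      obtain ⟨Cν, hCν⟩ := hKνc.isBounded.subset_closedBall 0
      have haeμ : ∀ᵐ y ∂μ, y ∈ Kμ := by
        rw [ae_iff]
        have h1 : {y | ¬ y ∈ Kμ} = Kμᶜ := rfl
        rw [h1]; exact hKμ0
      have haeν : ∀ᵐ y ∂μ, γ y ∈ Kν := by
        rw [ae_iff]
        have h1 : {y | ¬ γ y ∈ Kν} = γ ⁻¹' Kνᶜ := rfl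
        rw [h1, ← Measure.map_apply hγ hKνc.isClosed.measurableSet.compl, hmap]
        exact hKν0
      have hint_d : Integrable (fun y => ‖γ y - y‖) μ := by
        refine Integrable.mono' (integrable_const (Cν + Cμ))
          ((hγ.sub measurable_id).norm.aestronglyMeasurable) ?_
        filter_upwards [haeμ, haeν] with y h1 h2
        rw [Real.norm_eq_abs, abs_of_nonneg (norm_nonneg _)]
        refine le_trans (norm_sub_le _ _) (add_le_add ?_ ?_)
        · exact mem_closedBall_zero_iff.mp (hCν h2)
        · exact mem_closedBall_zero_iff.mp (hCμ h1)
      have hν_int : ∫ y, η (x - y) • (x - y) ∂ν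
          = ∫ y, η (x - γ y) • (x - γ y) ∂μ := by
        rw [← hmap, integral_map hγ.aemeasurable hcont.aestronglyMeasurable]
      have hint_fγ : Integrable (fun y : En n => η (x - γ y) • (x - γ y)) μ :=
        Integrable.mono' (integrable_const (R * L * R))
          ((hcont.measurable.comp hγ).aestronglyMeasurable)
          (ae_of_all _ (fun y => hboundf _))
      have hpt : ∀ y : En n, ‖η (x - y) • (x - y) - η (x - γ y) • (x - γ y)‖
          ≤ R * L * ‖γ y - y‖ := by
        intro y
        have h := key (x - y) (x - γ y)
        have h2 : (x - y) - (x - γ y) = γ y - y := by abel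
        rw [h2] at h
        exact h
      calc ‖(∫ y, η (x - y) • (x - y) ∂μ) - (∫ y, η (x - y) • (x - y) ∂ν)‖
          = ‖∫ y, (η (x - y) • (x - y) - η (x - γ y) • (x - γ y)) ∂μ‖ := by
            rw [hν_int, ← integral_sub (hint_f μ hμp) hint_fγ]
        _ ≤ ∫ y, ‖η (x - y) • (x - y) - η (x - γ y) • (x - γ y)‖ ∂μ :=
            norm_integral_le_integral_norm _
        _ ≤ ∫ y, R * L * ‖γ y - y‖ ∂μ :=
            integral_mono_of_nonneg (ae_of_all _ (fun y => norm_nonneg _))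
              (hint_d.const_mul (R * L)) (ae_of_all _ hpt)
        _ = R * L * ∫ y, ‖γ y - y‖ ∂μ := by rw [integral_const_mul]
    -- nonemptiness of the set of transport costs
    obtain ⟨γ₀, hγ₀, hmap₀⟩ := En_transport n hn μ ν hμ hν
    have hne : Set.Nonempty {c : ℝ | ∃ γ : En n → En n, Measurable γ ∧ Measure.map γ μ = ν ∧
        c = (∫ z, ‖γ z - z‖ ^ (1:ℝ) ∂μ) ^ (1/(1:ℝ))} :=
      ⟨_, γ₀, hγ₀, hmap₀, rfl⟩
    rw [Wp]
    rcases hL0.lt_or_eq with hL | hL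
    · have hRL : 0 < R * L := mul_pos hR hL
      have hdiv : ‖(∫ y, η (x - y) • (x - y) ∂μ) - (∫ y, η (x - y) • (x - y) ∂ν)‖ / (R * L)
          ≤ sInf {c : ℝ | ∃ γ : En n → En n, Measurable γ ∧ Measure.map γ μ = ν ∧
            c = (∫ z, ‖γ z - z‖ ^ (1:ℝ) ∂μ) ^ (1/(1:ℝ))} :=
        le_csInf hne (fun c hc => (div_le_iff₀ hRL).mpr (by rw [mul_comm]; exact hkeyS c hc))
      calc ‖(∫ y, η (x - y) • (x - y) ∂μ) - (∫ y, η (x - y) • (x - y) ∂ν)‖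
          = ‖(∫ y, η (x - y) • (x - y) ∂μ) - (∫ y, η (x - y) • (x - y) ∂ν)‖ / (R * L) * (R * L) :=
            by field_simp
        _ ≤ sInf {c : ℝ | ∃ γ : En n → En n, Measurable γ ∧ Measure.map γ μ = ν ∧
              c = (∫ z, ‖γ z - z‖ ^ (1:ℝ) ∂μ) ^ (1/(1:ℝ))} * (R * L) :=
            mul_le_mul_of_nonneg_right hdiv hRL.le
        _ = _ := by ring
    · obtain ⟨c₀, hc₀⟩ := hne
      have h1 := hkeyS c₀ hc₀
      rw [← hL] at h1 ⊢
      simpa using h1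

end
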